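/- Let N ≥ 1, s ∈ (0,1), and let Ω ⊂ ℝ^N be a bounded nonempty open set satisfying the measure density condition for small radii: there exists C_Ω > 0 such that |Ω ∩ B_ρ(x)| ≥ C_Ω ρ^N for all x ∈ Ω and all ρ ∈ (0,1]. Then there exists a constant C = C(Ω, s, N) > 0 such that for every v ∈ L²(Ω) with finite Gagliardo seminorm [v]_{s,Ω}, one has ‖v‖_{L²(Ω)}^{2 + 4s/N} ≤ C ‖v‖_{L¹(Ω)}^{4s/N} ( ‖v‖_{L²(Ω)}² + [v]_{s,Ω}² ). -/

import Mathlib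

open MeasureTheory ENNReal

/-- The squared Gagliardo seminorm `[v]_{s,Ω}²` on an open set `Ω ⊆ ℝ^N`. -/
noncomputable def gagliardoSq {N : ℕ} (s : ℝ) (Ω : Set (EuclideanSpace ℝ (Fin N)))
    (v : EuclideanSpace ℝ (Fin N) → ℝ) : ℝ≥0∞ :=
  ∫⁻ x in Ω, ∫⁻ y in Ω, ENNReal.ofReal ((v x - v y) ^ 2 / ‖x - y‖ ^ ((N : ℝ) + 2 * s))

private lemma mul_le_sq_add' (c x y : ℝ≥0∞) (hc0 : c ≠ 0) (hct : c ≠ ⊤) :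
    x * y ≤ c * x ^ 2 + c⁻¹ * y ^ 2 := by
  rcases le_total (c * x) y with h | h
  · have hx : x ≤ c⁻¹ * y := by
      have h2 := mul_le_mul_right h c⁻¹
      rwa [← mul_assoc, ENNReal.inv_mul_cancel hc0 hct, one_mul] at h2
    calc x * y ≤ (c⁻¹ * y) * y := mul_le_mul_left hx y
    _ = c⁻¹ * y ^ 2 := by ring
    _ ≤ _ := le_add_self
  · calc x * y ≤ x * (c * x) := mul_le_mul_right h x
    _ = c * x ^ 2 := by ring
    _ ≤ _ := self_le_add_right _ _

private lemma sq_lintegral_le' {α : Type*} [MeasurableSpace α] (μ : Measure α) (g : α → ℝ≥0∞)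
    (hg : AEMeasurable g μ) :
    (∫⁻ y, g y ∂μ) ^ 2 ≤ μ Set.univ * ∫⁻ y, (g y) ^ 2 ∂μ := by
  have hconj : (2:ℝ).HolderConjugate 2 := ⟨by norm_num, by norm_num, by norm_num⟩
  have h := ENNReal.lintegral_mul_le_Lp_mul_Lq μ hconj
      (aemeasurable_const (b := (1:ℝ≥0∞))) hg
  simp only [Pi.mul_apply, one_mul, ENNReal.one_rpow, lintegral_const] at h
  calc (∫⁻ y, g y ∂μ) ^ 2
      ≤ ((μ Set.univ) ^ (1/(2:ℝ)) * (∫⁻ y, g y ^ (2:ℝ) ∂μ) ^ (1/(2:ℝ))) ^ 2 := by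
        apply pow_le_pow_left' h
    _ = μ Set.univ * ∫⁻ y, (g y) ^ 2 ∂μ := by
        rw [mul_pow, ← ENNReal.rpow_natCast ((μ Set.univ) ^ (1/(2:ℝ))) 2,
          ← ENNReal.rpow_natCast ((∫⁻ y, g y ^ (2:ℝ) ∂μ) ^ (1/(2:ℝ))) 2,
          ← ENNReal.rpow_mul, ← ENNReal.rpow_mul]
        norm_num

private lemma gagliardoSq_congr {N : ℕ} (s : ℝ) (Ω : Set (EuclideanSpace ℝ (Fin N)))
    {v w : EuclideanSpace ℝ (Fin N) → ℝ} (h : v =ᵐ[volume.restrict Ω] w) :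
    gagliardoSq s Ω v = gagliardoSq s Ω w := by
  unfold gagliardoSq
  apply lintegral_congr_ae
  filter_upwards [h] with x hx
  apply lintegral_congr_ae
  filter_upwards [h] with y hy
  rw [hx, hy]

private lemma nash_key (N : ℕ) (s : ℝ) (hs : s ∈ Set.Ioo (0:ℝ) 1)
    (Ω : Set (EuclideanSpace ℝ (Fin N))) (hΩmeas : MeasurableSet Ω)
    (CΩ : ℝ) (hCΩ : 0 < CΩ)
    (hdensity : ∀ x ∈ Ω, ∀ ρ : ℝ, 0 < ρ → ρ ≤ 1 →
      ENNReal.ofReal (CΩ * ρ ^ N) ≤ volume (Ω ∩ Metric.ball x ρ))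
    (w : EuclideanSpace ℝ (Fin N) → ℝ) (hw : Measurable w)
    (hX : (∫⁻ x in Ω, (ENNReal.ofReal |w x|) ^ 2) ≠ ⊤)
    (ρ : ℝ) (hρ0 : 0 < ρ) (hρ1 : ρ ≤ 1) :
    (∫⁻ x in Ω, (ENNReal.ofReal |w x|) ^ 2) ≤
      ENNReal.ofReal ((4 * (volume (Metric.ball (0:EuclideanSpace ℝ (Fin N)) 1)).toReal / CΩ^2
          + 4 / CΩ) * ρ ^ (2*s)) * gagliardoSq s Ω w
      + ENNReal.ofReal ((4 * (volume (Metric.ball (0:EuclideanSpace ℝ (Fin N)) 1)).toReal / CΩ^2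
          + 4 / CΩ) / ρ ^ N) * (∫⁻ x in Ω, ENNReal.ofReal |w x|) ^ 2 := by
  obtain ⟨hs0, hs1⟩ := hs
  set u : EuclideanSpace ℝ (Fin N) → ℝ≥0∞ := fun x => ENNReal.ofReal |w x| with hu_def
  have hu_meas : Measurable u := hw.abs.ennreal_ofReal
  set X := ∫⁻ x in Ω, (u x) ^ 2 with hX_def
  set L := ∫⁻ x in Ω, u x with hL_def
  set G := gagliardoSq s Ω w with hG_def
  set vB := volume (Metric.ball (0:EuclideanSpace ℝ (Fin N)) 1) with hvB_def
  have hvB_ne : vB ≠ ⊤ := measure_ball_lt_top.ne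
  set c : ℝ := vB.toReal with hc_def
  have hc0 : 0 ≤ c := ENNReal.toReal_nonneg
  set K : ℝ := 4 * c / CΩ^2 + 4 / CΩ with hK_def
  have haR : (0:ℝ) < CΩ * ρ ^ N := by positivity
  set a : ℝ≥0∞ := ENNReal.ofReal (CΩ * ρ ^ N) with ha_def
  have ha0 : a ≠ 0 := by simp [ha_def, ENNReal.ofReal_pos, haR]
  have hat : a ≠ ⊤ := ENNReal.ofReal_ne_top
  have ha20 : a / 2 ≠ 0 := by
    simp [ENNReal.div_eq_top, ENNReal.div_ne_zero, ha0]
  have ha2t : a / 2 ≠ ⊤ := by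
    simp [ENNReal.div_eq_top, hat]
  set r' : ℝ≥0∞ := ENNReal.ofReal (ρ ^ ((N:ℝ) + 2*s)) with hr'_def
  set b : ℝ≥0∞ := ENNReal.ofReal (ρ ^ N) * vB with hb_def
  set I₁ : EuclideanSpace ℝ (Fin N) → ℝ≥0∞ := fun x => ∫⁻ y in Ω ∩ Metric.ball x ρ, ENNReal.ofReal |w x - w y| with hI1_def
  set KK : EuclideanSpace ℝ (Fin N) → ℝ≥0∞ := fun x =>
    ∫⁻ y in Ω, ENNReal.ofReal ((w x - w y) ^ 2 / ‖x - y‖ ^ ((N : ℝ) + 2 * s)) with hKK_def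
  have hG_eq : G = ∫⁻ x in Ω, KK x := rfl
  -- step 1 : pointwise bound on u x * a
  have step1 : ∀ x ∈ Ω, u x * a ≤ I₁ x + L := by
    intro x hx
    have h1 : u x * a ≤ u x * volume (Ω ∩ Metric.ball x ρ) :=
      mul_le_mul_right (hdensity x hx ρ hρ0 hρ1) _
    have h2 : u x * volume (Ω ∩ Metric.ball x ρ)
        = ∫⁻ _ in Ω ∩ Metric.ball x ρ, u x := by
      rw [setLIntegral_const]
    have h3 : (∫⁻ _ in Ω ∩ Metric.ball x ρ, u x)
        ≤ ∫⁻ y in Ω ∩ Metric.ball x ρ,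
            (ENNReal.ofReal |w x - w y| + ENNReal.ofReal |w y|) := by
      apply lintegral_mono
      intro y
      refine le_trans (ENNReal.ofReal_le_ofReal ?_) ENNReal.ofReal_add_le
      calc |w x| = |(w x - w y) + w y| := by ring_nf
      _ ≤ |w x - w y| + |w y| := abs_add_le _ _
    have h4 : (∫⁻ y in Ω ∩ Metric.ball x ρ,
            (ENNReal.ofReal |w x - w y| + ENNReal.ofReal |w y|))
        = I₁ x + ∫⁻ y in Ω ∩ Metric.ball x ρ, ENNReal.ofReal |w y| := by
      apply lintegral_add_left
      exact (measurable_const.sub hw).abs.ennreal_ofReal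
    have h5 : (∫⁻ y in Ω ∩ Metric.ball x ρ, ENNReal.ofReal |w y|) ≤ L :=
      lintegral_mono_set Set.inter_subset_left
    calc u x * a ≤ u x * volume (Ω ∩ Metric.ball x ρ) := h1
    _ = _ := h2
    _ ≤ _ := h3
    _ = I₁ x + ∫⁻ y in Ω ∩ Metric.ball x ρ, ENNReal.ofReal |w y| := h4
    _ ≤ I₁ x + L := add_le_add_right h5 _
  -- step 2 : bound on I₁ x ^ 2
  have step2 : ∀ x ∈ Ω, (I₁ x) ^ 2 ≤ b * (r' * KK x) := by
    intro x hx
    have hcs : (I₁ x) ^ 2 ≤ volume (Ω ∩ Metric.ball x ρ) *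
        ∫⁻ y in Ω ∩ Metric.ball x ρ, (ENNReal.ofReal |w x - w y|) ^ 2 := by
      have h := sq_lintegral_le' (volume.restrict (Ω ∩ Metric.ball x ρ))
        (fun y => ENNReal.ofReal |w x - w y|)
        ((measurable_const.sub hw).abs.ennreal_ofReal.aemeasurable)
      rwa [Measure.restrict_apply_univ] at h
    have hker : ∀ y ∈ Metric.ball x ρ, (ENNReal.ofReal |w x - w y|) ^ 2
        ≤ r' * ENNReal.ofReal ((w x - w y) ^ 2 / ‖x - y‖ ^ ((N : ℝ) + 2 * s)) := by
      intro y hy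
      rcases eq_or_ne x y with rfl | hxy
      · simp
      · have hxy0 : x - y ≠ 0 := sub_ne_zero_of_ne hxy
        have hn0 : 0 < ‖x - y‖ := norm_pos_iff.mpr hxy0
        have hnρ : ‖x - y‖ ≤ ρ := by
          have := Metric.mem_ball.mp hy
          rw [dist_comm] at this
          calc ‖x - y‖ = dist x y := (dist_eq_norm x y).symm
          _ ≤ ρ := this.le
        have ht0 : (0:ℝ) < ‖x - y‖ ^ ((N:ℝ) + 2*s) := Real.rpow_pos_of_pos hn0 _
        have htρ : ‖x - y‖ ^ ((N:ℝ) + 2*s) ≤ ρ ^ ((N:ℝ) + 2*s) :=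
          Real.rpow_le_rpow hn0.le hnρ (by positivity)
        rw [← ENNReal.ofReal_pow (abs_nonneg _), sq_abs,
          ← ENNReal.ofReal_mul (by positivity)]
        apply ENNReal.ofReal_le_ofReal
        calc (w x - w y) ^ 2
            = ‖x - y‖ ^ ((N:ℝ) + 2*s) * ((w x - w y) ^ 2 / ‖x - y‖ ^ ((N:ℝ) + 2*s)) := by
              field_simp
          _ ≤ ρ ^ ((N:ℝ) + 2*s) * ((w x - w y) ^ 2 / ‖x - y‖ ^ ((N:ℝ) + 2*s)) := by
              apply mul_le_mul_of_nonneg_right htρ (by positivity)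
    have hinner : (∫⁻ y in Ω ∩ Metric.ball x ρ, (ENNReal.ofReal |w x - w y|) ^ 2)
        ≤ r' * KK x := by
      calc (∫⁻ y in Ω ∩ Metric.ball x ρ, (ENNReal.ofReal |w x - w y|) ^ 2)
          ≤ ∫⁻ y in Ω ∩ Metric.ball x ρ,
              r' * ENNReal.ofReal ((w x - w y) ^ 2 / ‖x - y‖ ^ ((N : ℝ) + 2 * s)) := by
            apply setLIntegral_mono' (hΩmeas.inter measurableSet_ball)
            intro y hy
            exact hker y hy.2
        _ = r' * ∫⁻ y in Ω ∩ Metric.ball x ρ,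
              ENNReal.ofReal ((w x - w y) ^ 2 / ‖x - y‖ ^ ((N : ℝ) + 2 * s)) :=
            lintegral_const_mul' _ _ ENNReal.ofReal_ne_top
        _ ≤ r' * KK x := by
            apply mul_le_mul_right
            exact lintegral_mono_set Set.inter_subset_left
    have hvol : volume (Ω ∩ Metric.ball x ρ) ≤ b := by
      calc volume (Ω ∩ Metric.ball x ρ) ≤ volume (Metric.ball x ρ) :=
        measure_mono Set.inter_subset_right
      _ = b := by
          rw [hb_def, Measure.addHaar_ball_of_pos volume x hρ0, finrank_euclideanSpace_fin]
    calc (I₁ x) ^ 2 ≤ volume (Ω ∩ Metric.ball x ρ) *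
        ∫⁻ y in Ω ∩ Metric.ball x ρ, (ENNReal.ofReal |w x - w y|) ^ 2 := hcs
    _ ≤ b * (r' * KK x) := mul_le_mul' hvol hinner
  -- step 3 : integrate
  have main : a * X ≤ a/2 * X + ((a/2)⁻¹ * (b * (r' * G)) + L^2) := by
    calc a * X = ∫⁻ x in Ω, a * (u x)^2 := (lintegral_const_mul' a _ hat).symm
    _ ≤ ∫⁻ x in Ω, (u x * I₁ x + u x * L) := by
        apply setLIntegral_mono' hΩmeas
        intro x hx
        calc a * (u x)^2 = u x * (u x * a) := by ring
        _ ≤ u x * (I₁ x + L) := mul_le_mul_right (step1 x hx) _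
        _ = u x * I₁ x + u x * L := mul_add _ _ _
    _ = (∫⁻ x in Ω, u x * I₁ x) + ∫⁻ x in Ω, u x * L :=
        lintegral_add_right _ (hu_meas.mul_const L)
    _ ≤ (∫⁻ x in Ω, (a/2 * (u x)^2 + (a/2)⁻¹ * (I₁ x)^2)) + L * L := by
        apply add_le_add
        · apply lintegral_mono
          intro x
          exact mul_le_sq_add' (a/2) _ _ ha20 ha2t
        · rw [lintegral_mul_const'' _ hu_meas.aemeasurable]
    _ = a/2 * X + ((∫⁻ x in Ω, (a/2)⁻¹ * (I₁ x)^2) + L^2) := by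
        rw [lintegral_add_left (by fun_prop)]
        rw [lintegral_const_mul' _ _ ha2t]
        ring_nf
        rfl
    _ ≤ a/2 * X + ((a/2)⁻¹ * (b * (r' * G)) + L^2) := by
        apply add_le_add_right
        apply add_le_add_left
        calc (∫⁻ x in Ω, (a/2)⁻¹ * (I₁ x)^2)
            ≤ ∫⁻ x in Ω, (a/2)⁻¹ * (b * (r' * KK x)) := by
              apply setLIntegral_mono' hΩmeas
              intro x hx
              exact mul_le_mul_right (step2 x hx) _
          _ = (a/2)⁻¹ * (b * (r' * G)) := by
              rw [hG_eq, ← lintegral_const_mul' r' _ ENNReal.ofReal_ne_top,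
                ← lintegral_const_mul' b _ (by
                  rw [hb_def]; exact ENNReal.mul_ne_top ENNReal.ofReal_ne_top hvB_ne),
                ← lintegral_const_mul' _ _ (ENNReal.inv_ne_top.mpr ha20)]
  have h6 : a/2 * X ≤ (a/2)⁻¹ * (b * (r' * G)) + L^2 := by
    have ha_split : a * X = a/2 * X + a/2 * X := by
      rw [← add_mul, ENNReal.add_halves]
    rw [ha_split] at main
    exact (ENNReal.add_le_add_iff_left (ENNReal.mul_ne_top ha2t hX)).mp main
  have h7 : X ≤ (a/2)⁻¹ * ((a/2)⁻¹ * (b * (r' * G)) + L^2) := by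
    have hXeq : X = (a/2)⁻¹ * (a/2 * X) := by
      rw [← mul_assoc, ENNReal.inv_mul_cancel ha20 ha2t, one_mul]
    rw [hXeq]
    exact mul_le_mul_right h6 _
  -- final constant computations
  have ha2inv : (a/2)⁻¹ = ENNReal.ofReal (2 / (CΩ * ρ ^ N)) := by
    have h2 : a/2 = ENNReal.ofReal ((CΩ * ρ ^ N)/2) := by
      rw [ha_def, ENNReal.ofReal_div_of_pos (by norm_num), ENNReal.ofReal_ofNat]
    rw [h2, ← ENNReal.ofReal_inv_of_pos (by positivity), inv_div]
  have hcoef1 : (a/2)⁻¹ * ((a/2)⁻¹ * (b * r')) ≤ ENNReal.ofReal (K * ρ ^ (2*s)) := by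
    have hvBr : vB = ENNReal.ofReal c := (ENNReal.ofReal_toReal hvB_ne).symm
    have hbr : b = ENNReal.ofReal (ρ ^ N * c) := by
      rw [hb_def, hvBr, ← ENNReal.ofReal_mul (by positivity)]
    have hbr' : b * r' = ENNReal.ofReal ((ρ ^ N * c) * ρ ^ ((N:ℝ) + 2*s)) := by
      rw [hbr, hr'_def, ← ENNReal.ofReal_mul (by nlinarith [pow_pos hρ0 N, hc0, pow_nonneg hρ0.le N])]
    rw [ha2inv, hbr',
      ← ENNReal.ofReal_mul (by positivity),
      ← ENNReal.ofReal_mul (by positivity)]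
    apply ENNReal.ofReal_le_ofReal
    have hrpow : ρ ^ ((N:ℝ) + 2*s) = ρ ^ N * ρ ^ (2*s) := by
      rw [Real.rpow_add hρ0, Real.rpow_natCast]
    rw [hrpow]
    have heq : 2 / (CΩ * ρ ^ N) * (2 / (CΩ * ρ ^ N) * (ρ ^ N * c * (ρ ^ N * ρ ^ (2*s))))
        = (4 * c / CΩ ^ 2) * ρ ^ (2*s) := by
      field_simp
      ring
    rw [heq, hK_def]
    apply mul_le_mul_of_nonneg_right _ (by positivity)
    have : (0:ℝ) ≤ 4 / CΩ := by positivity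
    linarith
  have hcoef2 : (a/2)⁻¹ ≤ ENNReal.ofReal (K / ρ ^ N) := by
    rw [ha2inv]
    apply ENNReal.ofReal_le_ofReal
    rw [div_le_div_iff₀ (by positivity) (by positivity)]
    have hK4 : (4:ℝ)/CΩ ≤ K := by
      rw [hK_def]
      have h0 : (0:ℝ) ≤ 4 * c / CΩ^2 := div_nonneg (by linarith) (by positivity)
      linarith
    calc (2:ℝ) * ρ^N ≤ 4*ρ^N := by nlinarith [pow_pos hρ0 N]
    _ = (4/CΩ) * (CΩ*ρ^N) := by field_simp
    _ ≤ K * (CΩ*ρ^N) := mul_le_mul_of_nonneg_right hK4 (by positivity)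
  calc X ≤ (a/2)⁻¹ * ((a/2)⁻¹ * (b * (r' * G)) + L^2) := h7
  _ = ((a/2)⁻¹ * ((a/2)⁻¹ * (b * r'))) * G + (a/2)⁻¹ * L^2 := by ring
  _ ≤ ENNReal.ofReal (K * ρ ^ (2*s)) * G + ENNReal.ofReal (K / ρ ^ N) * L^2 := by
      apply add_le_add
      · exact mul_le_mul_left hcoef1 _
      · exact mul_le_mul_left hcoef2 _

private lemma nash_combine (N : ℕ) (hN : 1 ≤ N) (s : ℝ) (hs0 : 0 < s)
    (K : ℝ) (hK : 0 < K)
    (X G L : ℝ≥0∞) (hXt : X ≠ ⊤) (hX0 : X ≠ 0) (hGt : G ≠ ⊤) (hL0 : L ≠ 0) (hLt : L ≠ ⊤)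
    (hkey : ∀ ρ : ℝ, 0 < ρ → ρ ≤ 1 →
      X ≤ ENNReal.ofReal (K * ρ ^ (2*s)) * G + ENNReal.ofReal (K / ρ ^ N) * L ^ 2) :
    X ^ (((N:ℝ) + 2*s)/N) ≤
      ENNReal.ofReal (max 1 ((2*K) ^ (((N:ℝ)+2*s)/N))) * L ^ (4*s/(N:ℝ)) * (X + G) := by
  have hN0 : (0:ℝ) < N := by exact_mod_cast hN
  set q : ℝ := (N:ℝ) + 2*s with hq_def
  have hq0 : 0 < q := by positivity
  set l : ℝ := L.toReal with hl_def
  have hl0 : 0 < l := ENNReal.toReal_pos hL0 hLt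
  have hXGt : X + G ≠ ⊤ := ENNReal.add_ne_top.mpr ⟨hXt, hGt⟩
  have hXG0 : X + G ≠ 0 := by simp [add_eq_zero, hX0]
  set e : ℝ := (X + G).toReal with he_def
  have he0 : 0 < e := ENNReal.toReal_pos hXG0 hXGt
  have hLr : L = ENNReal.ofReal l := (ENNReal.ofReal_toReal hLt).symm
  have hXGr : X + G = ENNReal.ofReal e := (ENNReal.ofReal_toReal hXGt).symm
  have hXle : X ≤ ENNReal.ofReal e := hXGr ▸ le_self_add
  have hCge1 : (1:ℝ≥0∞) ≤ ENNReal.ofReal (max 1 ((2*K) ^ (q/N))) := by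
    rw [← ENNReal.ofReal_one]
    exact ENNReal.ofReal_le_ofReal (le_max_left _ _)
  have hL4 : L ^ (4*s/(N:ℝ)) = ENNReal.ofReal (l ^ (4*s/(N:ℝ))) := by
    rw [hLr, ENNReal.ofReal_rpow_of_pos hl0]
  by_cases hcase : e ≤ l^2
  · -- no need of the key inequality
    have h1 : X ^ (q/N) = X * X ^ (2*s/N) := by
      have hexp : q/N = 1 + 2*s/N := by field_simp; exact hq_def
      rw [hexp, ENNReal.rpow_add 1 (2*s/N) hX0 hXt, ENNReal.rpow_one]
    have hXL2 : X ≤ L^2 := by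
      calc X ≤ ENNReal.ofReal e := hXle
      _ ≤ ENNReal.ofReal (l^2) := ENNReal.ofReal_le_ofReal hcase
      _ = L^2 := by rw [hLr, ENNReal.ofReal_pow hl0.le]
    have h2 : X ^ (2*s/N) ≤ L ^ (4*s/(N:ℝ)) := by
      calc X ^ (2*s/N) ≤ (L^2) ^ (2*s/N) := ENNReal.rpow_le_rpow hXL2 (by positivity)
      _ = L ^ (4*s/(N:ℝ)) := by
          rw [← ENNReal.rpow_natCast L 2, ← ENNReal.rpow_mul]
          norm_num
          ring_nf
    calc X ^ (q/N) = X * X ^ (2*s/N) := h1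
    _ ≤ (X + G) * L ^ (4*s/(N:ℝ)) := mul_le_mul' le_self_add h2
    _ = 1 * L ^ (4*s/(N:ℝ)) * (X + G) := by ring
    _ ≤ ENNReal.ofReal (max 1 ((2*K) ^ (q/N))) * L ^ (4*s/(N:ℝ)) * (X + G) := by
        exact mul_le_mul_left (mul_le_mul_left hCge1 _) _
  · push_neg at hcase
    set ρ : ℝ := (l^2/e) ^ (1/q) with hρ_def
    have hρ0 : 0 < ρ := Real.rpow_pos_of_pos (by positivity) _
    have hρ1 : ρ ≤ 1 := Real.rpow_le_one (by positivity)
      ((div_le_one he0).mpr hcase.le) (by positivity)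
    have h := hkey ρ hρ0 hρ1
    set M : ℝ := (l^2) ^ (2*s/q) * e ^ ((N:ℝ)/q) with hM_def
    have hM0 : 0 < M := mul_pos (Real.rpow_pos_of_pos (by positivity) _)
      (Real.rpow_pos_of_pos he0 _)
    have hρ2s : ρ ^ (2*s) = (l^2/e) ^ (2*s/q) := by
      rw [hρ_def, ← Real.rpow_mul (by positivity)]
      congr 1
      field_simp
    have hρN : (ρ:ℝ) ^ N = (l^2/e) ^ ((N:ℝ)/q) := by
      rw [hρ_def, ← Real.rpow_natCast ((l^2/e) ^ (1/q)) N, ← Real.rpow_mul (by positivity)]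
      congr 1
      field_simp
    have h1 : ρ ^ (2*s) * e = M := by
      have hsub : e / e ^ (2*s/q) = e ^ ((N:ℝ)/q) := by
        nth_rewrite 1 [← Real.rpow_one e]
        rw [← Real.rpow_sub he0]
        congr 1
        field_simp
        ring
      rw [hρ2s, Real.div_rpow (by positivity) he0.le, div_mul_eq_mul_div, mul_div_assoc, hsub]
    have h2 : l^2 / ρ ^ N = M := by
      have hsub2 : l^2 / (l^2) ^ ((N:ℝ)/q) = (l^2) ^ (2*s/q) := by
        nth_rewrite 1 [← Real.rpow_one (l^2)]
        rw [← Real.rpow_sub (by positivity)]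
        congr 1
        field_simp
        ring
      rw [hρN, Real.div_rpow (by positivity) he0.le, div_div_eq_mul_div,
        mul_div_right_comm, hsub2]
    have hXbound : X ≤ ENNReal.ofReal (2*(K*M)) := by
      calc X ≤ ENNReal.ofReal (K * ρ ^ (2*s)) * G + ENNReal.ofReal (K / ρ ^ N) * L ^ 2 := h
      _ ≤ ENNReal.ofReal (K * ρ ^ (2*s)) * ENNReal.ofReal e
          + ENNReal.ofReal (K / ρ ^ N) * ENNReal.ofReal (l^2) := by
          apply add_le_add
          · exact mul_le_mul_right (hXGr ▸ le_add_self) _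
          · apply mul_le_mul_right
            rw [hLr, ENNReal.ofReal_pow hl0.le]
      _ = ENNReal.ofReal (K * ρ ^ (2*s) * e) + ENNReal.ofReal (K / ρ ^ N * l^2) := by
          rw [← ENNReal.ofReal_mul (by positivity), ← ENNReal.ofReal_mul (by positivity)]
      _ = ENNReal.ofReal (2*(K*M)) := by
          rw [mul_assoc K, h1]
          have : K / ρ ^ N * l^2 = K * (l^2 / ρ ^ N) := by ring
          rw [this, h2, ← ENNReal.ofReal_add (by positivity) (by positivity)]
          congr 1
          ring
    have hxR : X.toReal ≤ 2*(K*M) := ENNReal.toReal_le_of_le_ofReal (by positivity) hXbound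
    have hx0 : 0 < X.toReal := ENNReal.toReal_pos hX0 hXt
    have hMpow : M ^ (q/N) = l ^ (4*s/(N:ℝ)) * e := by
      rw [hM_def, Real.mul_rpow (by positivity) (by positivity),
        ← Real.rpow_mul (by positivity), ← Real.rpow_mul he0.le]
      have e1 : 2*s/q * (q/N) = 2*s/N := by field_simp
      have e2 : (N:ℝ)/q * (q/N) = 1 := by field_simp
      rw [e1, e2, Real.rpow_one]
      congr 1
      rw [← Real.rpow_natCast l 2, ← Real.rpow_mul hl0.le]
      congr 1
      push_cast
      field_simp
      ring
    have hfinal : X.toReal ^ (q/N) ≤ (2*K) ^ (q/N) * (l ^ (4*s/(N:ℝ)) * e) := by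
      calc X.toReal ^ (q/N) ≤ (2*(K*M)) ^ (q/N) :=
        Real.rpow_le_rpow hx0.le hxR (by positivity)
      _ = (2*K) ^ (q/N) * M ^ (q/N) := by
          rw [← Real.mul_rpow (by positivity) hM0.le]
          congr 1
          ring
      _ = (2*K) ^ (q/N) * (l ^ (4*s/(N:ℝ)) * e) := by rw [hMpow]
    calc X ^ (q/N) = ENNReal.ofReal (X.toReal ^ (q/N)) := by
          rw [← ENNReal.ofReal_rpow_of_pos hx0, ENNReal.ofReal_toReal hXt]
    _ ≤ ENNReal.ofReal ((2*K) ^ (q/N) * (l ^ (4*s/(N:ℝ)) * e)) :=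
        ENNReal.ofReal_le_ofReal hfinal
    _ = ENNReal.ofReal ((2*K) ^ (q/N)) * (ENNReal.ofReal (l ^ (4*s/(N:ℝ))) * ENNReal.ofReal e) := by
        rw [← ENNReal.ofReal_mul (by positivity), ← ENNReal.ofReal_mul (by positivity)]
    _ = ENNReal.ofReal ((2*K) ^ (q/N)) * L ^ (4*s/(N:ℝ)) * (X + G) := by
        rw [hL4, hXGr, mul_assoc]
    _ ≤ ENNReal.ofReal (max 1 ((2*K) ^ (q/N))) * L ^ (4*s/(N:ℝ)) * (X + G) := by
        exact mul_le_mul_left (mul_le_mul_left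
          (ENNReal.ofReal_le_ofReal (le_max_right _ _)) _) _

/-- Nash-type inequality on a bounded domain satisfying the measure density condition
for small radii. -/
theorem nash_bounded_domain (N : ℕ) (hN : 1 ≤ N) (s : ℝ) (hs : s ∈ Set.Ioo (0 : ℝ) 1)
    (Ω : Set (EuclideanSpace ℝ (Fin N))) (hne : Ω.Nonempty) (hΩopen : IsOpen Ω)
    (hbdd : Bornology.IsBounded Ω)
    (CΩ : ℝ) (hCΩ : 0 < CΩ)
    (hdensity : ∀ x ∈ Ω, ∀ ρ : ℝ, 0 < ρ → ρ ≤ 1 →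
      ENNReal.ofReal (CΩ * ρ ^ N) ≤ volume (Ω ∩ Metric.ball x ρ)) :
    ∃ C : ℝ, 0 < C ∧ ∀ v : EuclideanSpace ℝ (Fin N) → ℝ,
      MemLp v 2 (volume.restrict Ω) → gagliardoSq s Ω v ≠ ⊤ →
      eLpNorm v 2 (volume.restrict Ω) ^ (2 + 4 * s / (N : ℝ)) ≤
        ENNReal.ofReal C * eLpNorm v 1 (volume.restrict Ω) ^ (4 * s / (N : ℝ)) *
          (eLpNorm v 2 (volume.restrict Ω) ^ (2 : ℝ) + gagliardoSq s Ω v) := by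
  have hs0 : 0 < s := hs.1
  have hN0 : (0:ℝ) < N := by exact_mod_cast hN
  have hΩmeas : MeasurableSet Ω := hΩopen.measurableSet
  set vB := volume (Metric.ball (0:EuclideanSpace ℝ (Fin N)) 1) with hvB_def
  have hvB_ne : vB ≠ ⊤ := measure_ball_lt_top.ne
  set K : ℝ := 4 * vB.toReal / CΩ^2 + 4 / CΩ with hK_def
  have hK0 : 0 < K := add_pos_of_nonneg_of_pos
    (div_nonneg (by nlinarith [ENNReal.toReal_nonneg (a := vB)]) (by positivity))
    (by positivity)
  set q : ℝ := (N:ℝ) + 2*s with hq_def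
  have hq0 : 0 < q := by
    rw [hq_def]; linarith
  have hqN0 : 0 < q/N := div_pos hq0 hN0
  set C : ℝ := max 1 ((2*K) ^ (q/N)) with hC_def
  refine ⟨C, lt_of_lt_of_le zero_lt_one (le_max_left _ _), ?_⟩
  intro v hv hGtop
  set w := hv.1.mk v with hw_def
  have hvw : v =ᵐ[volume.restrict Ω] w := hv.1.ae_eq_mk
  have hw_meas : Measurable w := hv.1.stronglyMeasurable_mk.measurable
  have h2 : eLpNorm v 2 (volume.restrict Ω) = eLpNorm w 2 (volume.restrict Ω) :=
    eLpNorm_congr_ae hvw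
  have h1 : eLpNorm v 1 (volume.restrict Ω) = eLpNorm w 1 (volume.restrict Ω) :=
    eLpNorm_congr_ae hvw
  have hGcongr : gagliardoSq s Ω v = gagliardoSq s Ω w := gagliardoSq_congr s Ω hvw
  rw [hGcongr] at hGtop
  rw [h1, h2, hGcongr]
  set X := ∫⁻ x in Ω, (ENNReal.ofReal |w x|)^2 with hX_def
  set L := ∫⁻ x in Ω, ENNReal.ofReal |w x| with hL_def
  set G := gagliardoSq s Ω w with hG_def
  have hL_eq : eLpNorm w 1 (volume.restrict Ω) = L := by
    rw [eLpNorm_one_eq_lintegral_enorm, hL_def]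
    apply lintegral_congr
    intro x
    rw [← ofReal_norm, Real.norm_eq_abs]
  have hY_eq : eLpNorm w 2 (volume.restrict Ω) = X ^ (1/2:ℝ) := by
    rw [eLpNorm_eq_lintegral_rpow_enorm_toReal two_ne_zero ENNReal.ofNat_ne_top]
    simp only [ENNReal.toReal_ofNat]
    rw [one_div]
    congr 1
    apply lintegral_congr
    intro x
    rw [← ofReal_norm, Real.norm_eq_abs,
      ← ENNReal.rpow_natCast (ENNReal.ofReal |w x|) 2]
    norm_num
  have hX2 : eLpNorm w 2 (volume.restrict Ω) ^ (2:ℝ) = X := by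
    rw [hY_eq, ← ENNReal.rpow_mul]
    norm_num
  have hvfin : eLpNorm w 2 (volume.restrict Ω) ≠ ⊤ := by
    rw [← h2]; exact hv.2.ne
  have hXt : X ≠ ⊤ := by
    rw [← hX2]
    exact (ENNReal.rpow_lt_top_of_nonneg (by norm_num) hvfin).ne
  rw [hX2, hL_eq, hY_eq, ← ENNReal.rpow_mul]
  have hexp : (1/2:ℝ)*(2+4*s/N) = q/N := by
    rw [hq_def]; field_simp; ring
  rw [hexp]
  by_cases hX0 : X = 0
  · rw [hX0, ENNReal.zero_rpow_of_pos hqN0]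
    exact zero_le
  have hXG0 : X + G ≠ 0 := by simp [add_eq_zero, hX0]
  have hC0' : ENNReal.ofReal C ≠ 0 := by
    simp only [ne_eq, ENNReal.ofReal_eq_zero, not_le]
    exact lt_of_lt_of_le zero_lt_one (le_max_left _ _)
  by_cases hLt : L = ⊤
  · have hrhs : ENNReal.ofReal C * L ^ (4*s/(N:ℝ)) * (X + G) = ⊤ := by
      rw [hLt, ENNReal.top_rpow_of_pos (by positivity), ENNReal.mul_top hC0',
        ENNReal.top_mul hXG0]
    rw [hrhs]
    exact le_top
  have hL0 : L ≠ 0 := by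
    intro h
    apply hX0
    have hae : (fun x => ENNReal.ofReal |w x|) =ᵐ[volume.restrict Ω] 0 :=
      (lintegral_eq_zero_iff hw_meas.abs.ennreal_ofReal).mp h
    have hae2 : (fun x => (ENNReal.ofReal |w x|)^2) =ᵐ[volume.restrict Ω] 0 := by
      filter_upwards [hae] with x hx
      simp only [Pi.zero_apply] at hx ⊢
      rw [hx]
      simp
    rw [hX_def, lintegral_congr_ae hae2]
    simp
  have hkey : ∀ ρ : ℝ, 0 < ρ → ρ ≤ 1 →
      X ≤ ENNReal.ofReal (K * ρ ^ (2*s)) * G + ENNReal.ofReal (K / ρ ^ N) * L ^ 2 := by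
    intro ρ hρ0 hρ1
    exact nash_key N s hs Ω hΩmeas CΩ hCΩ hdensity w hw_meas hXt ρ hρ0 hρ1
  exact nash_combine N hN s hs0 K hK0 X G L hXt hX0 hGtop hL0 hLt hkey
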